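/- Let two circles meet at distinct points J and K. Let A, B, C lie on the first circle (forming a nondegenerate triangle), and let a, b, c be the second intersections of lines AK, BK, CK with the second circle. Then triangle abc is the image of triangle ABC under a direct similarity (spiral similarity) centered at J. -/

import Mathlib

open Complex

private lemma collin_param (A K a : ℂ) (h : Collinear ℝ ({A, K, a} : Set ℂ))
    (hAK : A ≠ K) : ∃ t : ℝ, a = K + (t : ℂ) * (A - K) := by
  rw [collinear_iff_of_mem (show K ∈ ({A, K, a} : Set ℂ) by simp)] at h
  obtain ⟨v, hv⟩ := h
  obtain ⟨rA, hA⟩ := hv A (by simp)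
  obtain ⟨ra, hra⟩ := hv a (by simp)
  have hrA : rA ≠ 0 := by
    rintro rfl
    simp at hA
    exact hAK hA
  refine ⟨ra / rA, ?_⟩
  have hAv : A - K = (rA : ℂ) * v := by
    rw [hA]; simp [Complex.real_smul]
  have hav : a - K = (ra : ℂ) * v := by
    rw [hra]; simp [Complex.real_smul]
  have hrA' : (rA : ℂ) ≠ 0 := Complex.ofReal_ne_zero.2 hrA
  have : a = K + (ra : ℂ) * v := by rw [← hav]; ring
  rw [this, hAv]
  push_cast
  field_simp

private lemma key (O₁ O₂ J K X x : ℂ) (t r₁ r₂ : ℝ)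
    (hJ1 : (J - O₁) * (starRingEnd ℂ) (J - O₁) = (r₁ : ℂ) ^ 2)
    (hK1 : (K - O₁) * (starRingEnd ℂ) (K - O₁) = (r₁ : ℂ) ^ 2)
    (hX1 : (X - O₁) * (starRingEnd ℂ) (X - O₁) = (r₁ : ℂ) ^ 2)
    (hJ2 : (J - O₂) * (starRingEnd ℂ) (J - O₂) = (r₂ : ℂ) ^ 2)
    (hK2 : (K - O₂) * (starRingEnd ℂ) (K - O₂) = (r₂ : ℂ) ^ 2)
    (hx2 : (x - O₂) * (starRingEnd ℂ) (x - O₂) = (r₂ : ℂ) ^ 2)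
    (hx : x = K + (t : ℂ) * (X - K))
    (ht : (t : ℂ) ≠ 0) (hu : X - K ≠ 0) (hJK : J - K ≠ 0)
    (hd1 : K - O₁ ≠ 0) (hd2 : J - O₁ ≠ 0) (hd3 : X - O₁ ≠ 0)
    (he1 : K - O₂ ≠ 0) (he2 : J - O₂ ≠ 0) (hr1 : (r₁ : ℂ) ≠ 0) :
    x = J + (O₂ - J) / (O₁ - J) * (X - J) := by
  subst hx
  simp only [map_add, map_sub, map_mul, Complex.conj_ofReal] at hx2 hJ1 hK1 hX1 hJ2 hK2
  -- E : the second-intersection equation, with t cancelled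
  have E : (K - O₂) * ((starRingEnd ℂ) X - (starRingEnd ℂ) K)
      + (X - K) * ((starRingEnd ℂ) K - (starRingEnd ℂ) O₂)
      + (t : ℂ) * ((X - K) * ((starRingEnd ℂ) X - (starRingEnd ℂ) K)) = 0 := by
    apply mul_left_cancel₀ ht
    rw [mul_zero]
    linear_combination hx2 - hK2
  have CC : (K - O₁) * ((starRingEnd ℂ) J - (starRingEnd ℂ) O₂) * (J - K)
      = (K - O₂) * ((starRingEnd ℂ) J - (starRingEnd ℂ) O₁) * (J - K) := by
    linear_combination (-(K - O₂)) * (hJ1 - hK1) + (K - O₁) * (hJ2 - hK2)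
  have CC' : (K - O₁) * ((starRingEnd ℂ) J - (starRingEnd ℂ) O₂)
      = (K - O₂) * ((starRingEnd ℂ) J - (starRingEnd ℂ) O₁) :=
    mul_right_cancel₀ hJK CC
  have A1 : (X - O₁) * (K - O₁) * ((starRingEnd ℂ) X - (starRingEnd ℂ) K)
      = (r₁ : ℂ) ^ 2 * (K - X) := by
    linear_combination (K - O₁) * hX1 - (X - O₁) * hK1
  have A2 : (K - O₁) * ((starRingEnd ℂ) K - (starRingEnd ℂ) O₂)
      = (r₁ : ℂ) ^ 2 + (O₁ - O₂) * ((starRingEnd ℂ) J - (starRingEnd ℂ) O₁) := by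
    linear_combination hK1 + CC'
  have G2 : (O₁ - J) * ((K + (t : ℂ) * (X - K)) - J) * ((X - K) * (r₁ : ℂ) ^ 2)
      = (O₂ - J) * (X - J) * ((X - K) * (r₁ : ℂ) ^ 2) := by
    linear_combination (K - O₁) * (J - O₁) * (X - O₁) * E
      - ((K - O₂) * (J - O₁) + (t : ℂ) * (X - K) * (J - O₁)) * A1
      - (X - K) * (X - O₁) * (J - O₁) * A2
      - (X - K) * (X - O₁) * (O₁ - O₂) * hJ1
  have G3 : (O₁ - J) * ((K + (t : ℂ) * (X - K)) - J) = (O₂ - J) * (X - J) :=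
    mul_right_cancel₀ (mul_ne_zero hu (pow_ne_zero 2 hr1)) G2
  have hOJ : O₁ - J ≠ 0 := fun h => hd2 (by linear_combination -h)
  field_simp
  linear_combination G3


/-- Two circles meet at distinct points `J` and `K`.  `A, B, C` lie on the first circle
and `a, b, c` are the second intersections of lines `AK, BK, CK` with the second circle.
Then triangle `abc` is the image of triangle `ABC` under a direct (spiral) similarity
centred at `J`. -/
theorem stmt_5 (O₁ O₂ J K A B C a b c : ℂ) (r₁ r₂ : ℝ)
    (hO : O₁ ≠ O₂) (hJK : J ≠ K)
    (hJ1 : dist O₁ J = r₁) (hK1 : dist O₁ K = r₁)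
    (hJ2 : dist O₂ J = r₂) (hK2 : dist O₂ K = r₂)
    (hA : dist O₁ A = r₁) (hB : dist O₁ B = r₁) (hC : dist O₁ C = r₁)
    (hncol : ¬ Collinear ℝ ({A, B, C} : Set ℂ))
    (hAK : A ≠ K) (hBK : B ≠ K) (hCK : C ≠ K)
    (hAJ : A ≠ J) (hBJ : B ≠ J) (hCJ : C ≠ J)
    (ha : dist O₂ a = r₂) (hb : dist O₂ b = r₂) (hc : dist O₂ c = r₂)
    (haK : a ≠ K) (hbK : b ≠ K) (hcK : c ≠ K)
    (hacol : Collinear ℝ ({A, K, a} : Set ℂ))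
    (hbcol : Collinear ℝ ({B, K, b} : Set ℂ))
    (hccol : Collinear ℝ ({C, K, c} : Set ℂ)) :
    ∃ w : ℂ, w ≠ 0 ∧ a = J + w * (A - J) ∧ b = J + w * (B - J) ∧ c = J + w * (C - J) := by
  -- radii are nonzero
  have hr1 : r₁ ≠ 0 := by
    rintro rfl
    exact hJK ((dist_eq_zero.1 hJ1).symm.trans (dist_eq_zero.1 hK1))
  have hr2 : r₂ ≠ 0 := by
    rintro rfl
    exact hJK ((dist_eq_zero.1 hJ2).symm.trans (dist_eq_zero.1 hK2))
  have hr1' : (r₁ : ℂ) ≠ 0 := Complex.ofReal_ne_zero.2 hr1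
  -- convert distance hypotheses to complex equations
  have conv : ∀ (O Z : ℂ) (r : ℝ), dist O Z = r →
      (Z - O) * (starRingEnd ℂ) (Z - O) = (r : ℂ) ^ 2 := by
    intro O Z r h
    rw [Complex.mul_conj, Complex.normSq_eq_norm_sq, ← Complex.dist_eq, dist_comm, h]
    push_cast
    ring
  have nz : ∀ (O Z : ℂ) (r : ℝ), dist O Z = r → r ≠ 0 → Z - O ≠ 0 := by
    intro O Z r h hr h0
    exact hr (by rw [← h, sub_eq_zero.1 h0, dist_self])
  have hO1J : O₁ - J ≠ 0 := fun h => nz O₁ J r₁ hJ1 hr1 (by linear_combination -h)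
  have hO2J : O₂ - J ≠ 0 := fun h => nz O₂ J r₂ hJ2 hr2 (by linear_combination -h)
  refine ⟨(O₂ - J) / (O₁ - J), div_ne_zero hO2J hO1J, ?_, ?_, ?_⟩
  · obtain ⟨t, hta⟩ := collin_param A K a hacol hAK
    have ht : (t : ℂ) ≠ 0 := by
      intro h
      exact haK (by rw [hta, h]; ring)
    exact key O₁ O₂ J K A a t r₁ r₂ (conv _ _ _ hJ1) (conv _ _ _ hK1) (conv _ _ _ hA)
      (conv _ _ _ hJ2) (conv _ _ _ hK2) (conv _ _ _ ha) hta ht (sub_ne_zero.2 hAK)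
      (sub_ne_zero.2 hJK) (nz O₁ K r₁ hK1 hr1) (nz O₁ J r₁ hJ1 hr1) (nz O₁ A r₁ hA hr1)
      (nz O₂ K r₂ hK2 hr2) (nz O₂ J r₂ hJ2 hr2) hr1'
  · obtain ⟨t, hta⟩ := collin_param B K b hbcol hBK
    have ht : (t : ℂ) ≠ 0 := by
      intro h
      exact hbK (by rw [hta, h]; ring)
    exact key O₁ O₂ J K B b t r₁ r₂ (conv _ _ _ hJ1) (conv _ _ _ hK1) (conv _ _ _ hB)
      (conv _ _ _ hJ2) (conv _ _ _ hK2) (conv _ _ _ hb) hta ht (sub_ne_zero.2 hBK)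
      (sub_ne_zero.2 hJK) (nz O₁ K r₁ hK1 hr1) (nz O₁ J r₁ hJ1 hr1) (nz O₁ B r₁ hB hr1)
      (nz O₂ K r₂ hK2 hr2) (nz O₂ J r₂ hJ2 hr2) hr1'
  · obtain ⟨t, hta⟩ := collin_param C K c hccol hCK
    have ht : (t : ℂ) ≠ 0 := by
      intro h
      exact hcK (by rw [hta, h]; ring)
    exact key O₁ O₂ J K C c t r₁ r₂ (conv _ _ _ hJ1) (conv _ _ _ hK1) (conv _ _ _ hC)
      (conv _ _ _ hJ2) (conv _ _ _ hK2) (conv _ _ _ hc) hta ht (sub_ne_zero.2 hCK)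
      (sub_ne_zero.2 hJK) (nz O₁ K r₁ hK1 hr1) (nz O₁ J r₁ hJ1 hr1) (nz O₁ C r₁ hC hr1)
      (nz O₂ K r₂ hK2 hr2) (nz O₂ J r₂ hJ2 hr2) hr1'
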